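/- Let Γ be a finite group of order n, let S ⊆ Γ satisfy S = S⁻¹ and 1 ∉ S, let G = Cay(Γ, S), and let 1 ≤ k ≤ n−1. Suppose Γ has a k-set decomposition, i.e. the right translation action of Γ on k-element subsets of Γ (given by (A, g) ↦ Ag = {a g : a ∈ A}) is free. Then Γ acts freely by graph automorphisms on the k-token graph F_k(G) via right translation, and this action has exactly C(n,k)/n orbits on the vertex set of F_k(G) (so F_k(G) is a lift by the group Γ of a base graph with C(n,k)/n vertices). -/

import Mathlib

open scoped symmDiff

/-- The `k`-token graph of a simple graph `G`: vertices are the `k`-element subsets of the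
vertex set, two subsets being adjacent iff their symmetric difference is `{u, v}` for some
edge `{u, v}` of `G`. -/
def tokenGraph {V : Type*} [DecidableEq V] (G : SimpleGraph V) (k : ℕ) :
    SimpleGraph {A : Finset V // A.card = k} where
  Adj A B := ∃ u v : V, G.Adj u v ∧
    (A : Finset V) ∆ (B : Finset V) = {u, v}
  symm := ⟨fun A B h => by
    obtain ⟨u, v, huv, h⟩ := h
    exact ⟨u, v, huv, by rwa [symmDiff_comm]⟩⟩
  loopless := ⟨fun A h => by
    obtain ⟨u, v, huv, h⟩ := h
    rw [symmDiff_self] at h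
    exact (Finset.insert_ne_empty u {v}) h.symm⟩

theorem stmt_8 {Γ : Type*} [Group Γ] [Fintype Γ] [DecidableEq Γ]
    (S : Set Γ) (hSinv : S⁻¹ = S) (hS1 : (1 : Γ) ∉ S)
    (G : SimpleGraph Γ) (hG : ∀ u v : Γ, G.Adj u v ↔ v * u⁻¹ ∈ S)
    (k : ℕ) (hk1 : 1 ≤ k) (hk2 : k ≤ Fintype.card Γ - 1)
    -- Γ has a k-set decomposition: the right translation action on k-subsets is free
    (hfree : ∀ (A : Finset Γ), A.card = k → ∀ g : Γ, A.image (· * g) = A → g = 1) :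
    -- Γ acts by graph automorphisms on the k-token graph via right translation
    (∀ g : Γ, ∃ φ : tokenGraph G k ≃g tokenGraph G k,
      ∀ A : {A : Finset Γ // A.card = k},
        ((φ A : {A : Finset Γ // A.card = k}) : Finset Γ) = (A : Finset Γ).image (· * g)) ∧
    -- this action is free on the vertex set of the token graph
    (∀ (A : {A : Finset Γ // A.card = k}) (g : Γ),
      (A : Finset Γ).image (· * g) = (A : Finset Γ) → g = 1) ∧
    -- and it has exactly C(n,k)/n orbits on the vertex set
    Nat.card (Quot fun A B : {A : Finset Γ // A.card = k} =>
      ∃ g : Γ, (A : Finset Γ).image (· * g) = (B : Finset Γ)) =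
      (Fintype.card Γ).choose k / Fintype.card Γ := by
  classical
  -- basic facts about right translation of finsets
  have hcomp : ∀ (A : Finset Γ) (a b : Γ),
      (A.image (· * a)).image (· * b) = A.image (· * (a * b)) := by
    intro A a b
    rw [Finset.image_image]
    apply Finset.image_congr
    intro x _
    simp [mul_assoc]
  have hone : ∀ (A : Finset Γ), A.image (· * (1 : Γ)) = A := by
    intro A
    rw [show ((· * (1 : Γ)) : Γ → Γ) = id by funext x; simp, Finset.image_id]
  have hcard : ∀ (A : Finset Γ) (g : Γ), (A.image (· * g)).card = A.card := by
    intro A g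
    exact Finset.card_image_of_injective _ (mul_left_injective g)
  -- uniqueness of the translating element
  have huniq : ∀ (A : Finset Γ), A.card = k → ∀ g g' : Γ,
      A.image (· * g) = A.image (· * g') → g = g' := by
    intro A hA g g' h
    have h2 : A.image (· * (g * g'⁻¹)) = A := by
      rw [← hcomp, h, hcomp, mul_inv_cancel, hone]
    exact mul_inv_eq_one.mp (hfree A hA _ h2)
  -- graph isomorphism for a single g, one-directional adjacency lemma first
  have hadj : ∀ (g : Γ) (A B : {A : Finset Γ // A.card = k}),
      (tokenGraph G k).Adj A B →
      (tokenGraph G k).Adj ⟨(A : Finset Γ).image (· * g), by rw [hcard]; exact A.2⟩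
        ⟨(B : Finset Γ).image (· * g), by rw [hcard]; exact B.2⟩ := by
    intro g A B ⟨u, v, huv, hAB⟩
    refine ⟨u * g, v * g, ?_, ?_⟩
    · rw [hG] at huv ⊢
      simpa [mul_assoc] using huv
    · show ((A : Finset Γ).image (· * g)) ∆ ((B : Finset Γ).image (· * g)) = _
      rw [← Finset.image_symmDiff _ _ (mul_left_injective g), hAB]
      simp [Finset.image_insert]
  refine ⟨?_, ?_, ?_⟩
  · -- part 1: graph automorphisms
    intro g
    refine ⟨⟨⟨fun A => ⟨(A : Finset Γ).image (· * g), by rw [hcard]; exact A.2⟩,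
        fun A => ⟨(A : Finset Γ).image (· * g⁻¹), by rw [hcard]; exact A.2⟩,
        ?_, ?_⟩, ?_⟩, fun A => rfl⟩
    · intro A; ext1
      show ((A : Finset Γ).image (· * g)).image (· * g⁻¹) = (A : Finset Γ)
      rw [hcomp, mul_inv_cancel, hone]
    · intro A; ext1
      show ((A : Finset Γ).image (· * g⁻¹)).image (· * g) = (A : Finset Γ)
      rw [hcomp, inv_mul_cancel, hone]
    · intro A B
      constructor
      · intro h
        have h2 := hadj g⁻¹ _ _ h
        convert h2 using 2
        · show (A : Finset Γ) = ((A : Finset Γ).image (· * g)).image (· * g⁻¹)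
          rw [hcomp, mul_inv_cancel, hone]
        · show (B : Finset Γ) = ((B : Finset Γ).image (· * g)).image (· * g⁻¹)
          rw [hcomp, mul_inv_cancel, hone]
      · exact hadj g A B
  · -- part 2: freeness
    intro A g h
    exact hfree A A.2 g h
  · -- part 3: counting orbits
    set α := {A : Finset Γ // A.card = k} with hα
    set r : α → α → Prop := fun A B =>
      ∃ g : Γ, (A : Finset Γ).image (· * g) = (B : Finset Γ) with hr
    have hequiv : Equivalence r := by
      constructor
      · intro A; exact ⟨1, hone _⟩
      · rintro A B ⟨g, h⟩
        exact ⟨g⁻¹, by rw [← h, hcomp, mul_inv_cancel, hone]⟩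
      · rintro A B C ⟨g, h⟩ ⟨g', h'⟩
        exact ⟨g * g', by rw [← h', ← h, hcomp]⟩
    have hexact : ∀ {A B : α}, Quot.mk r A = Quot.mk r B → r A B := by
      intro A B h
      exact hequiv.eqvGen_iff.mp (Quot.eq.mp h)
    -- the bijection (Quot r) × Γ → α
    set F : Quot r × Γ → α := fun p =>
      ⟨((p.1.out : Finset Γ)).image (· * p.2), by rw [hcard]; exact p.1.out.2⟩ with hF
    have hFbij : Function.Bijective F := by
      constructor
      · rintro ⟨q, g⟩ ⟨q', g'⟩ h
        have h1 : ((q.out : Finset Γ)).image (· * g)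
            = ((q'.out : Finset Γ)).image (· * g') := congrArg Subtype.val h
        have hqq : q = q' := by
          have : r q.out q'.out := by
            refine ⟨g * g'⁻¹, ?_⟩
            rw [← hcomp, h1, hcomp, mul_inv_cancel, hone]
          rw [← q.out_eq, ← q'.out_eq]
          exact Quot.sound this
        subst hqq
        have hgg : g = g' := huniq (q.out : Finset Γ) q.out.2 g g' h1
        rw [hgg]
      · intro A
        obtain ⟨g, hg⟩ : r (Quot.mk r A).out A := hexact ((Quot.mk r A).out_eq)
        exact ⟨(Quot.mk r A, g), Subtype.ext hg⟩
    have hcardα : Nat.card α = (Fintype.card Γ).choose k := by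
      rw [Nat.card_eq_fintype_card]
      exact Fintype.card_finset_len k
    have hmain : (Fintype.card Γ).choose k = Nat.card (Quot r) * Fintype.card Γ := by
      rw [← hcardα, ← Nat.card_eq_of_bijective F hFbij, Nat.card_prod,
        Nat.card_eq_fintype_card (α := Γ)]
    have hpos : 0 < Fintype.card Γ := Fintype.card_pos
    rw [hmain, Nat.mul_div_cancel _ hpos]
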